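/- Let 𝔐𝔅⁵ denote the class of all metric spaces X with at least 5 points such that for every three points x, y, z of X the equality 2·max{dist(x,y), dist(y,z), dist(z,x)} = dist(x,y) + dist(y,z) + dist(z,x) holds. Then the real line ℝ with its standard metric is a minimal 𝔐𝔅⁵-universal metric space; moreover, if X is 𝔐𝔅⁵-universal and X ∈ 𝔐𝔅⁵, or if X is any minimal 𝔐𝔅⁵-universal metric space, then X is isometric to ℝ. -/

import Mathlib

universe u v

open Function Set

/-- `f` is an isometric (distance-preserving) embedding of metric spaces. -/
def IsIsomEmb {X : Type u} {Y : Type v} [MetricSpace X] [MetricSpace Y] (f : X → Y) : Prop :=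
  ∀ a b : X, dist (f a) (f b) = dist a b

/-- `X` embeds isometrically into `Y`. -/
def IsomEmbeds (X : Type u) (Y : Type v) [MetricSpace X] [MetricSpace Y] : Prop :=
  ∃ f : X → Y, IsIsomEmb f

/-- `X` and `Y` are isometric. -/
def IsIsometricTo (X : Type u) (Y : Type v) [MetricSpace X] [MetricSpace Y] : Prop :=
  ∃ f : X → Y, IsIsomEmb f ∧ Surjective f

/-- Among every three points of `A`, one lies between the other two:
`2·max{d(x,y), d(y,z), d(z,x)} = d(x,y) + d(y,z) + d(z,x)` for all `x, y, z`. -/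
def MenBetween (A : Type u) [MetricSpace A] : Prop :=
  ∀ x y z : A,
    2 * max (dist x y) (max (dist y z) (dist z x)) = dist x y + dist y z + dist z x

/-- `A` belongs to the class `𝔐𝔅⁵`: it has at least 5 points and among every three of its
points one lies between the other two. -/
def MB5 (A : Type u) [MetricSpace A] : Prop :=
  5 ≤ Cardinal.mk A ∧ MenBetween A

/-- `Y` is universal for the class `𝔐𝔅⁵`. -/
def MB5Universal.{u', v'} (Y : Type v') [MetricSpace Y] : Prop :=
  ∀ (A : Type u') [MetricSpace A], MB5 A → IsomEmbeds A Y

/-- `Y` is minimal universal for the class `𝔐𝔅⁵`. -/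
def MB5MinUniversal.{u', v'} (Y : Type v') [MetricSpace Y] : Prop :=
  MB5Universal.{u', v'} Y ∧ ∀ S : Set Y, MB5Universal.{u'} ↥S → S = Set.univ

/-! ### Auxiliary machinery -/

/-- Among three reals, one is the sum of the other two. -/
def L3 (u v w : ℝ) : Prop := u = v + w ∨ v = w + u ∨ w = u + v

lemma menb_lin3 {A : Type*} [MetricSpace A] (h : MenBetween A) (x y z : A) :
    L3 (dist x y) (dist y z) (dist z x) := by
  have h' := h x y z
  unfold L3
  rcases le_total (dist y z) (dist z x) with h2 | h2
  · rw [max_eq_right h2] at h'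
    rcases le_total (dist x y) (dist z x) with h1 | h1
    · rw [max_eq_right h1] at h'; right; right; linarith
    · rw [max_eq_left h1] at h'; left; linarith
  · rw [max_eq_left h2] at h'
    rcases le_total (dist x y) (dist y z) with h1 | h1
    · rw [max_eq_right h1] at h'; right; left; linarith
    · rw [max_eq_left h1] at h'; left; linarith

set_option maxHeartbeats 4000000 in
lemma keyLemma {s t α β γ δ : ℝ} (hs : 0 < s) (ht : 0 < t)
    (hα : 0 < α) (hβ : 0 < β) (hγ : 0 < γ) (hδ : 0 < δ)
    (T1 : L3 s γ α) (T2 : L3 t β γ) (T3 : L3 s δ β) (T4 : L3 t α δ)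
    (T5 : L3 (s + t) β α) (T6 : L3 (s + t) δ γ) : False := by
  rcases T1 with h1 | h1 | h1 <;> rcases T2 with h2 | h2 | h2 <;>
    rcases T3 with h3 | h3 | h3 <;> rcases T4 with h4 | h4 | h4 <;>
    rcases T5 with h5 | h5 | h5 <;> rcases T6 with h6 | h6 | h6 <;> linarith

lemma exists_fifth {A : Type*} (hc : 5 ≤ Cardinal.mk A) (a b c d : A) :
    ∃ r : A, r ≠ a ∧ r ≠ b ∧ r ≠ c ∧ r ≠ d := by
  by_contra h
  push_neg at h
  have hsub : (Set.univ : Set A) ⊆ ({a, b, c, d} : Set A) := by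
    intro r _
    by_cases h1 : r = a; · simp [h1]
    by_cases h2 : r = b; · simp [h2]
    by_cases h3 : r = c; · simp [h3]
    have h4 := h r h1 h2 h3
    simp [h4]
  have hle : Cardinal.mk A ≤ 4 := by
    have h1 := Cardinal.mk_le_mk_of_subset hsub
    rw [Cardinal.mk_univ] at h1
    refine h1.trans ?_
    have e1 : Cardinal.mk ↥({d} : Set A) = 1 := Cardinal.mk_singleton d
    have i1 : Cardinal.mk ↥(insert c ({d} : Set A)) ≤ 2 := by
      refine Cardinal.mk_insert_le.trans ?_
      rw [e1]; norm_num
    have i2 : Cardinal.mk ↥(insert b (insert c ({d} : Set A))) ≤ 3 := by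
      refine Cardinal.mk_insert_le.trans ?_
      calc Cardinal.mk ↥(insert c ({d} : Set A)) + 1 ≤ 2 + 1 := by
            exact add_le_add_left i1 1
        _ = 3 := by norm_num
    show Cardinal.mk ↥(insert a (insert b (insert c ({d} : Set A))) : Set A) ≤ 4
    refine Cardinal.mk_insert_le.trans ?_
    calc Cardinal.mk ↥(insert b (insert c ({d} : Set A))) + 1 ≤ 3 + 1 := by
          exact add_le_add_left i2 1
      _ = 4 := by norm_num
  have : (5 : Cardinal) ≤ 4 := hc.trans hle
  norm_num at this

section Emb

variable {A : Type*} [MetricSpace A]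

/-- `x` is on the nonnegative side of `p` (relative to direction `q`). -/
def side (p q x : A) : Prop :=
  dist p x + dist x q = dist p q ∨ dist p q + dist q x = dist p x

open Classical in
/-- The candidate isometric embedding into `ℝ`: signed distance to `p`. -/
noncomputable def emb (p q : A) (x : A) : ℝ :=
  if side p q x then dist p x else - dist p x

lemma not_side {p q x : A} (hm : MenBetween A) (h : ¬ side p q x) :
    dist x q = dist p q + dist p x ∧ 0 < dist p x := by
  have hl := menb_lin3 hm p x q
  have hqp : dist q p = dist p q := dist_comm q p
  have hqx : dist q x = dist x q := dist_comm q x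
  rcases hl with h1 | h1 | h1
  · exact absurd (Or.inr (by linarith)) h
  · refine ⟨by linarith, ?_⟩
    rcases (dist_nonneg : (0:ℝ) ≤ dist p x).lt_or_eq with hpos | h0
    · exact hpos
    · exfalso
      apply h
      left
      have hx : p = x := by rw [← dist_eq_zero]; exact h0.symm
      subst hx
      simp
  · exact absurd (Or.inl (by linarith)) h

lemma side_xq {p q x : A} (h : side p q x) :
    dist x q = dist p q - dist p x ∨ dist x q = dist p x - dist p q := by
  rcases h with h | h
  · left; linarith
  · right; rw [dist_comm q x] at h; linarith

/-- No `MenBetween` space with at least 5 points contains the "4-cycle" configuration. -/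
lemma no_cycle (hm : MenBetween A) (hc : 5 ≤ Cardinal.mk A) (x p y q : A)
    (h1 : 0 < dist p x) (h2 : 0 < dist p y)
    (hxy : dist x y = dist p x + dist p y)
    (hpq : dist p q = dist p x + dist p y)
    (hxq : dist x q = dist p y)
    (hyq : dist y q = dist p x) : False := by
  obtain ⟨r, hrx, hry, hrp, hrq⟩ := exists_fifth hc x y p q
  have T1 := menb_lin3 hm x p r
  have T2 := menb_lin3 hm p y r
  have T3 := menb_lin3 hm y q r
  have T4 := menb_lin3 hm q x r
  have T5 := menb_lin3 hm x y r
  have T6 := menb_lin3 hm p q r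
  rw [dist_comm x p, dist_comm p r] at T1
  rw [dist_comm y r] at T2
  rw [hyq, dist_comm q r] at T3
  rw [dist_comm q x, hxq, dist_comm x r] at T4
  rw [hxy, dist_comm y r] at T5
  rw [hpq, dist_comm q r] at T6
  exact keyLemma h1 h2 (dist_pos.2 hrx) (dist_pos.2 hry) (dist_pos.2 hrp) (dist_pos.2 hrq)
    T1 T2 T3 T4 T5 T6

lemma emb_dist_l (hm : MenBetween A) (hc : 5 ≤ Cardinal.mk A) {p q : A} (hpq : p ≠ q)
    {x : A} (hx : side p q x) (y : A) :
    dist (emb p q x) (emb p q y) = dist x y := by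
  have hk : 0 < dist p q := dist_pos.2 hpq
  rw [Real.dist_eq]
  unfold emb
  rw [if_pos hx]
  have t0 := menb_lin3 hm x p y
  have c1 : dist x p = dist p x := dist_comm x p
  have c2 : dist y x = dist x y := dist_comm y x
  have hd : (0:ℝ) ≤ dist x y := dist_nonneg
  by_cases hy : side p q y
  · rw [if_pos hy]
    rw [abs_eq dist_nonneg]
    rcases t0 with h0 | h0 | h0
    · left; linarith
    · right; linarith
    · -- p is strictly between: 4-cycle situation unless an endpoint degenerates
      by_cases ha0 : dist p x = 0
      · right; linarith
      · by_cases hb0 : dist p y = 0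
        · left; linarith
        · exfalso
          have ha : 0 < dist p x := lt_of_le_of_ne dist_nonneg (Ne.symm ha0)
          have hb : 0 < dist p y := lt_of_le_of_ne dist_nonneg (Ne.symm hb0)
          have hxq := side_xq hx
          have hyq := side_xq hy
          have t1 := menb_lin3 hm x y q
          have c3 : dist q x = dist x q := dist_comm q x
          have hxqn : (0:ℝ) ≤ dist x q := dist_nonneg
          have hyqn : (0:ℝ) ≤ dist y q := dist_nonneg
          rcases hxq with hu | hu <;> rcases hyq with hv | hv <;>
            rcases t1 with h1 | h1 | h1 <;>
            first
              | linarith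
              | exact no_cycle hm hc x p y q ha hb (by linarith) (by linarith)
                  (by linarith) (by linarith)
  · rw [if_neg hy]
    obtain ⟨hyq, hb⟩ := not_side hm hy
    rw [abs_eq dist_nonneg]
    rcases t0 with h0 | h0 | h0
    · -- y between p and x : contradiction (needs 5th point in one subcase)
      exfalso
      have ha : 0 < dist p x := by linarith
      have hxq := side_xq hx
      have t1 := menb_lin3 hm x y q
      have c3 : dist q x = dist x q := dist_comm q x
      have hxqn : (0:ℝ) ≤ dist x q := dist_nonneg
      rcases hxq with hu | hu <;> rcases t1 with h1 | h1 | h1 <;>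
      first
        | linarith
        | exact no_cycle hm hc y p q x hb hk (by linarith) (by linarith)
            (by rw [dist_comm y x]; linarith) (by rw [dist_comm q x]; linarith)
    · -- x between p and y
      by_cases ha0 : dist p x = 0
      · left; linarith
      · exfalso
        have ha : 0 < dist p x := lt_of_le_of_ne dist_nonneg (Ne.symm ha0)
        have hxq := side_xq hx
        have t1 := menb_lin3 hm x y q
        have c3 : dist q x = dist x q := dist_comm q x
        have hxqn : (0:ℝ) ≤ dist x q := dist_nonneg
        rcases hxq with hu | hu <;> rcases t1 with h1 | h1 | h1 <;> linarith
    · left; linarith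

lemma emb_dist_neg (hm : MenBetween A) {p q : A} (hpq : p ≠ q)
    {x y : A} (hx : ¬ side p q x) (hy : ¬ side p q y) :
    dist (emb p q x) (emb p q y) = dist x y := by
  have hk : 0 < dist p q := dist_pos.2 hpq
  obtain ⟨hxq, ha⟩ := not_side hm hx
  obtain ⟨hyq, hb⟩ := not_side hm hy
  rw [Real.dist_eq]
  unfold emb
  rw [if_neg hx, if_neg hy]
  have t0 := menb_lin3 hm x p y
  have c1 : dist x p = dist p x := dist_comm x p
  have c2 : dist y x = dist x y := dist_comm y x
  rw [abs_eq dist_nonneg]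
  rcases t0 with h0 | h0 | h0
  · right; linarith
  · left; linarith
  · exfalso
    have t1 := menb_lin3 hm x y q
    have c3 : dist q x = dist x q := dist_comm q x
    rcases t1 with h1 | h1 | h1 <;> linarith

lemma emb_isom (hm : MenBetween A) (hc : 5 ≤ Cardinal.mk A)
    {p q : A} (hpq : p ≠ q) : IsIsomEmb (emb p q) := by
  intro x y
  by_cases hx : side p q x
  · exact emb_dist_l hm hc hpq hx y
  · by_cases hy : side p q y
    · rw [dist_comm (emb p q x), dist_comm x y]
      exact emb_dist_l hm hc hpq hy x
    · exact emb_dist_neg hm hpq hx hy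

end Emb

lemma nontrivial_of_mb5 {A : Type*} (hc : 5 ≤ Cardinal.mk A) : Nontrivial A := by
  rw [← Cardinal.one_lt_iff_nontrivial]
  calc (1 : Cardinal) < 5 := by norm_num
    _ ≤ _ := hc

lemma real_universal : MB5Universal.{u, 0} ℝ := by
  intro A _ hA
  obtain ⟨hc, hm⟩ := hA
  have : Nontrivial A := nontrivial_of_mb5 hc
  obtain ⟨p, q, hpq⟩ := exists_pair_ne A
  exact ⟨emb p q, emb_isom hm hc hpq⟩

lemma menb_real : MenBetween ℝ := by
  intro x y z
  simp only [Real.dist_eq, max_def]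
  split_ifs <;>
    rcases abs_cases (x - y) with ⟨h1, h1'⟩ | ⟨h1, h1'⟩ <;>
    rcases abs_cases (y - z) with ⟨h2, h2'⟩ | ⟨h2, h2'⟩ <;>
    rcases abs_cases (z - x) with ⟨h3, h3'⟩ | ⟨h3, h3'⟩ <;>
    linarith

lemma mb5_ulift : MB5 (ULift.{u} ℝ) := by
  constructor
  · have hinj : Function.Injective
        (fun i : ULift.{u} (Fin 5) => (ULift.up ((i.down.val : ℝ)) : ULift.{u} ℝ)) := by
      intro i j h
      have h' : ((i.down.val : ℝ)) = ((j.down.val : ℝ)) := congrArg ULift.down h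
      have h2 : i.down.val = j.down.val := Nat.cast_injective h'
      exact ULift.down_injective (Fin.ext h2)
    have h1 := Cardinal.mk_le_of_injective hinj
    simpa using h1
  · intro x y z
    simp only [ULift.dist_eq]
    exact menb_real x.down y.down z.down

lemma real_isom_surj {f : ℝ → ℝ} (hf : IsIsomEmb f) : Surjective f := by
  have h0 : ∀ a : ℝ, (f a - f 0) ^ 2 = a ^ 2 := by
    intro a
    have := hf a 0
    rw [Real.dist_eq, Real.dist_eq] at this
    have h2 := congrArg (· ^ 2) this
    simpa [sq_abs] using h2
  have hmul : ∀ a b : ℝ, (f a - f 0) * (f b - f 0) = a * b := by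
    intro a b
    have := hf a b
    rw [Real.dist_eq, Real.dist_eq] at this
    have h2 : (f a - f b) ^ 2 = (a - b) ^ 2 := by
      have := congrArg (· ^ 2) this
      simpa [sq_abs] using this
    have ha := h0 a
    have hb := h0 b
    nlinarith [ha, hb, h2]
  intro t
  refine ⟨(t - f 0) * (f 1 - f 0), ?_⟩
  have h1 := hmul ((t - f 0) * (f 1 - f 0)) 1
  have h2 : (f 1 - f 0) * (f 1 - f 0) = 1 := by
    have := hmul 1 1
    linarith
  linear_combination (f 1 - f 0) * h1 + (t - f ((t - f 0) * (f 1 - f 0))) * h2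

/-- The real line is a minimal `𝔐𝔅⁵`-universal metric space; moreover every
`𝔐𝔅⁵`-universal member of `𝔐𝔅⁵` and every minimal `𝔐𝔅⁵`-universal metric space is
isometric to `ℝ`. -/
theorem statement16 :
    MB5MinUniversal.{u} ℝ ∧
    ∀ (X : Type v) [MetricSpace X],
      ((MB5Universal.{u} X ∧ MB5 X) ∨ MB5MinUniversal.{u} X) →
      IsIsometricTo X ℝ := by
  constructor
  · constructor
    · exact real_universal
    · intro S hS
      obtain ⟨f, hf⟩ := hS (ULift.{u} ℝ) mb5_ulift
      have hiso : IsIsomEmb (fun r : ℝ => ((f (ULift.up r) : ℝ))) := by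
        intro a b
        have h1 := hf (ULift.up a) (ULift.up b)
        rw [Subtype.dist_eq, ULift.dist_up_up] at h1
        exact h1
      have hsurj := real_isom_surj hiso
      apply Set.eq_univ_of_forall
      intro t
      obtain ⟨r, hr⟩ := hsurj t
      rw [← hr]
      exact (f (ULift.up r)).2
  · intro X _ hX
    rcases hX with ⟨hu, hc, hm⟩ | ⟨hu, hmin⟩
    · -- universal member of MB5
      have : Nontrivial X := nontrivial_of_mb5 hc
      obtain ⟨p, q, hpq⟩ := exists_pair_ne X
      have hfi : IsIsomEmb (emb p q) := emb_isom hm hc hpq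
      obtain ⟨g, hg⟩ := hu (ULift.{u} ℝ) mb5_ulift
      have hiso : IsIsomEmb (fun r : ℝ => emb p q (g (ULift.up r))) := by
        intro a b
        rw [hfi, hg, ULift.dist_up_up]
      have hs := real_isom_surj hiso
      refine ⟨emb p q, hfi, ?_⟩
      intro t
      obtain ⟨r, hr⟩ := hs t
      exact ⟨g (ULift.up r), hr⟩
    · -- minimal universal
      obtain ⟨g, hg⟩ := hu (ULift.{u} ℝ) mb5_ulift
      have hei : ∀ a b : ℝ, dist (g (ULift.up a)) (g (ULift.up b)) = dist a b := by
        intro a b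
        rw [hg, ULift.dist_up_up]
      have hSuniv : MB5Universal.{u} ↥(Set.range (fun r : ℝ => g (ULift.up r))) := by
        intro A _ hA
        obtain ⟨h, hh⟩ := real_universal.{u} A hA
        refine ⟨fun a => ⟨g (ULift.up (h a)), Set.mem_range_self (h a)⟩, ?_⟩
        intro a b
        rw [Subtype.dist_eq]
        exact (hei (h a) (h b)).trans (hh a b)
      have hrange := hmin _ hSuniv
      have hesurj : Surjective (fun r : ℝ => g (ULift.up r)) := by
        intro x
        have hx : x ∈ Set.range (fun r : ℝ => g (ULift.up r)) := by rw [hrange]; trivial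
        exact hx
      have heinj : Injective (fun r : ℝ => g (ULift.up r)) := by
        intro a b hab
        have hab' : g (ULift.up a) = g (ULift.up b) := hab
        have hd : dist a b = 0 := by
          rw [← hei a b, hab', dist_self]
        exact dist_eq_zero.mp hd
      choose F hF using hesurj
      refine ⟨F, ?_, ?_⟩
      · intro a b
        have h1 : dist (g (ULift.up (F a))) (g (ULift.up (F b))) = dist (F a) (F b) :=
          hei _ _
        have h2 : g (ULift.up (F a)) = a := hF a
        have h3 : g (ULift.up (F b)) = b := hF b
        rw [h2, h3] at h1
        exact h1.symm
      · intro r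
        refine ⟨g (ULift.up r), ?_⟩
        exact heinj (hF (g (ULift.up r)))
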